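/- arXiv:1501.04235 — 5 statements merged into one kernel-verified Lean document; each statement's English description precedes it below -/
import Mathlib

section
/- Let m : ℝ² → ℝ, l : ℝ → ℝ, n : ℝ → ℝ be smooth functions with m(0,0) = 1, and define f(x,y) = x·y·m(x,y) + x⁴·l(x) + y⁴·n(y). Then there exist ε > 0 and a smooth function g : (−ε, ε) → ℝ with g(0) = −l(0) such that for all |x| < ε, f(x, x³·g(x)) = 0. -/
open ContinuousLinearMap

noncomputable def auxEquiv (c d : ℝ) (hd : d ≠ 0) : (ℝ × ℝ) ≃L[ℝ] (ℝ × ℝ) :=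
  LinearEquiv.toContinuousLinearEquiv
    { toFun := fun p => (p.1, c * p.1 + d * p.2)
      invFun := fun p => (p.1, (p.2 - c * p.1) / d)
      map_add' := by intro p q; simp [Prod.ext_iff]; ring
      map_smul' := by intro r p; simp [Prod.ext_iff]; ring
      left_inv := by intro p; simp [Prod.ext_iff]; field_simp
      right_inv := by intro p; simp [Prod.ext_iff]; field_simp; ring }

lemma auxEquiv_apply (c d : ℝ) (hd : d ≠ 0) (p : ℝ × ℝ) :
    auxEquiv c d hd p = (p.1, c * p.1 + d * p.2) := rfl

lemma clm_apply_pair (A : (ℝ × ℝ) →L[ℝ] ℝ) (u v : ℝ) :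
    A (u, v) = u * A (1, 0) + v * A (0, 1) := by
  have h : (u, v) = u • ((1:ℝ), (0:ℝ)) + v • ((0:ℝ), (1:ℝ)) := by
    simp [Prod.ext_iff]
  rw [h, map_add, map_smul, map_smul, smul_eq_mul, smul_eq_mul]

theorem stmt1 (m : ℝ → ℝ → ℝ) (l n : ℝ → ℝ)
    (hm : ContDiff ℝ (⊤ : ℕ∞) (fun p : ℝ × ℝ => m p.1 p.2))
    (hl : ContDiff ℝ (⊤ : ℕ∞) l) (hn : ContDiff ℝ (⊤ : ℕ∞) n)
    (hm0 : m 0 0 = 1)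
    (f : ℝ → ℝ → ℝ)
    (hf : f = fun x y => x * y * m x y + x ^ 4 * l x + y ^ 4 * n y) :
    ∃ ε > (0 : ℝ), ∃ g : ℝ → ℝ,
      ContDiffOn ℝ (⊤ : ℕ∞) g (Set.Ioo (-ε) ε) ∧ g 0 = -l 0 ∧
      ∀ x : ℝ, |x| < ε → f x (x ^ 3 * g x) = 0 := by
  have h1top : (1 : WithTop ℕ∞) ≤ ((⊤ : ℕ∞) : WithTop ℕ∞) := by exact_mod_cast le_top
  -- the rescaled function F and the graph map Φ
  set F : ℝ × ℝ → ℝ := fun p =>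
    p.2 * m p.1 (p.1 ^ 3 * p.2) + l p.1 + p.1 ^ 8 * p.2 ^ 4 * n (p.1 ^ 3 * p.2) with hFdef
  have hsub : ContDiff ℝ (⊤ : ℕ∞) (fun p : ℝ × ℝ => p.1 ^ 3 * p.2) :=
    (contDiff_fst.pow 3).mul contDiff_snd
  have hmc : ContDiff ℝ (⊤ : ℕ∞) (fun p : ℝ × ℝ => m p.1 (p.1 ^ 3 * p.2)) :=
    hm.comp (contDiff_fst.prodMk hsub)
  have hnc : ContDiff ℝ (⊤ : ℕ∞) (fun p : ℝ × ℝ => n (p.1 ^ 3 * p.2)) :=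
    hn.comp hsub
  have hFc : ContDiff ℝ (⊤ : ℕ∞) F :=
    ((contDiff_snd.mul hmc).add (hl.comp contDiff_fst)).add
      (((contDiff_fst.pow 8).mul (contDiff_snd.pow 4)).mul hnc)
  set Φ : ℝ × ℝ → ℝ × ℝ := fun p => (p.1, F p) with hΦdef
  have hΦc : ContDiff ℝ (⊤ : ℕ∞) Φ := contDiff_fst.prodMk hFc
  have hFdiff : Differentiable ℝ F := hFc.differentiable (zero_lt_one.trans_le h1top).ne'
  -- derivative data
  set d : ℝ × ℝ → ℝ := fun p => fderiv ℝ F p (0, 1) with hddef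
  have hdcont : Continuous d := by
    exact (hFc.continuous_fderiv (zero_lt_one.trans_le h1top).ne').clm_apply continuous_const
  -- on the axis x = 0 the partial derivative in z is m 0 0 = 1
  have hdaxis : ∀ t : ℝ, d (0, t) = m 0 0 := by
    intro t
    have hcurve : HasDerivAt (fun z : ℝ => ((0 : ℝ), z)) (0, 1) t :=
      (hasDerivAt_const t (0 : ℝ)).prodMk (hasDerivAt_id t)
    have hcomp : HasDerivAt (fun z : ℝ => F (0, z)) (fderiv ℝ F (0, t) (0, 1)) t :=
      (hFdiff (0, t)).hasFDerivAt.comp_hasDerivAt t hcurve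
    have hexp : (fun z : ℝ => F (0, z)) = fun z : ℝ => z * m 0 0 + l 0 := by
      funext z; simp [hFdef]
    have hder : HasDerivAt (fun z : ℝ => F (0, z)) (m 0 0) t := by
      rw [hexp]
      simpa using ((hasDerivAt_id t).mul_const (m 0 0)).add_const (l 0)
    exact hcomp.unique hder
  -- at each point where d ≠ 0, Φ has an invertible derivative
  have hΦderiv : ∀ p : ℝ × ℝ, ∀ hp : d p ≠ 0,
      HasFDerivAt Φ ((auxEquiv (fderiv ℝ F p (1, 0)) (d p) hp : (ℝ × ℝ) ≃L[ℝ] (ℝ × ℝ)) :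
        (ℝ × ℝ) →L[ℝ] (ℝ × ℝ)) p := by
    intro p hp
    have h1 : HasFDerivAt Φ ((ContinuousLinearMap.fst ℝ ℝ ℝ).prod (fderiv ℝ F p)) p :=
      (hasFDerivAt_fst).prodMk (hFdiff p).hasFDerivAt
    have heq : ((auxEquiv (fderiv ℝ F p (1, 0)) (d p) hp : (ℝ × ℝ) ≃L[ℝ] (ℝ × ℝ)) :
        (ℝ × ℝ) →L[ℝ] (ℝ × ℝ)) = (ContinuousLinearMap.fst ℝ ℝ ℝ).prod (fderiv ℝ F p) := by
      apply ContinuousLinearMap.ext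
      intro q
      refine Prod.ext rfl ?_
      show fderiv ℝ F p (1, 0) * q.1 + d p * q.2 = fderiv ℝ F p q
      conv_rhs => rw [show q = (q.1, q.2) from rfl, clm_apply_pair]
      rw [hddef]
      ring
    rw [heq]
    exact h1
  -- the base point
  set a : ℝ × ℝ := ((0 : ℝ), -l 0) with hadef
  have hda : d a = 1 := by rw [hadef]; rw [hdaxis]; exact hm0
  have hda0 : d a ≠ 0 := by rw [hda]; norm_num
  have hΦa : Φ a = (0, 0) := by
    simp [hΦdef, hFdef, hadef, hm0]
  -- inverse function theorem at a
  have hS : HasStrictFDerivAt Φ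
      ((auxEquiv (fderiv ℝ F a (1, 0)) (d a) hda0 : (ℝ × ℝ) ≃L[ℝ] (ℝ × ℝ)) :
        (ℝ × ℝ) →L[ℝ] (ℝ × ℝ)) a :=
    hΦc.contDiffAt.hasStrictFDerivAt' (hΦderiv a hda0) (zero_lt_one.trans_le h1top).ne'
  set P := hS.toOpenPartialHomeomorph Φ with hPdef
  have hPcoe : ⇑P = Φ := rfl
  have haso : a ∈ P.source := hS.mem_toOpenPartialHomeomorph_source
  have h00t : ((0 : ℝ), (0 : ℝ)) ∈ P.target := by
    have := hS.image_mem_toOpenPartialHomeomorph_target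
    rwa [hΦa] at this
  have hsymm00 : P.symm (0, 0) = a := by
    have := P.left_inv haso
    rwa [hPcoe, hΦa] at this
  -- the open set where the inverse is smooth
  set V : Set (ℝ × ℝ) := P.target ∩ P.symm ⁻¹' {p | d p ≠ 0} with hVdef
  have hVopen : IsOpen V := by
    have h := P.symm.isOpen_inter_preimage (s := {p : ℝ × ℝ | d p ≠ 0}) (isOpen_ne_fun hdcont continuous_const)
    simpa [hVdef] using h
  have h00V : ((0 : ℝ), (0 : ℝ)) ∈ V := by
    refine ⟨h00t, ?_⟩
    simp only [Set.mem_preimage, Set.mem_setOf_eq, hsymm00]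
    exact hda0
  have hΨsmooth : ∀ y ∈ V, ContDiffAt ℝ (⊤ : ℕ∞) P.symm y := by
    rintro y ⟨hyt, hyd⟩
    exact P.contDiffAt_symm hyt (hΦderiv _ hyd) hΦc.contDiffAt
  -- choose ε
  obtain ⟨ε, hε, hball⟩ := Metric.isOpen_iff.1 hVopen _ h00V
  have hmem : ∀ x : ℝ, |x| < ε → ((x, (0 : ℝ)) : ℝ × ℝ) ∈ V := by
    intro x hx
    apply hball
    simp only [Metric.mem_ball, Prod.dist_eq, Real.dist_eq]
    simpa using hx
  refine ⟨ε, hε, fun x => (P.symm (x, 0)).2, ?_, ?_, ?_⟩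
  · intro x hx
    have hxV : ((x, (0 : ℝ)) : ℝ × ℝ) ∈ V := hmem x (abs_lt.2 ⟨hx.1, hx.2⟩)
    have h1 : ContDiffAt ℝ (⊤ : ℕ∞) (fun t : ℝ => ((t, (0 : ℝ)) : ℝ × ℝ)) x :=
      contDiffAt_id.prodMk contDiffAt_const
    have h2 : ContDiffAt ℝ (⊤ : ℕ∞) (fun t : ℝ => P.symm (t, 0)) x :=
      (hΨsmooth _ hxV).comp x h1
    exact (contDiffAt_snd.comp x h2).contDiffWithinAt
  · show (P.symm ((0 : ℝ), (0 : ℝ))).2 = -l 0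
    rw [hsymm00]
  · intro x hx
    have hxV := hmem x hx
    have hrinv : Φ (P.symm (x, 0)) = (x, 0) := by
      rw [← hPcoe]; exact P.right_inv hxV.1
    set q := P.symm ((x : ℝ), (0 : ℝ)) with hqdef
    have hq1 : q.1 = x := congrArg Prod.fst hrinv
    have hq2 : F q = 0 := congrArg Prod.snd hrinv
    have hFval : q.2 * m x (x ^ 3 * q.2) + l x + x ^ 8 * q.2 ^ 4 * n (x ^ 3 * q.2) = 0 := by
      rw [← hq1]; exact hq2
    rw [hf]
    show x * (x ^ 3 * q.2) * m x (x ^ 3 * q.2) + x ^ 4 * l x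
        + (x ^ 3 * q.2) ^ 4 * n (x ^ 3 * q.2) = 0
    linear_combination x ^ 4 * hFval
end

section
/- Let A, B, C : ℝ → ℝ be three times continuously differentiable functions with A(0) = B(0) = C(0) = 0 and satisfying A′(x)·C′(x) = B′(x)² for all x. Then J := A·C − B² vanishes to fourth order at 0, i.e. J(0) = J′(0) = J″(0) = J‴(0) = 0. -/
theorem stmt2 (A B C : ℝ → ℝ)
    (hA : ContDiff ℝ 3 A) (hB : ContDiff ℝ 3 B) (hC : ContDiff ℝ 3 C)
    (hA0 : A 0 = 0) (hB0 : B 0 = 0) (hC0 : C 0 = 0)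
    (hrel : ∀ x : ℝ, deriv A x * deriv C x = (deriv B x) ^ 2)
    (J : ℝ → ℝ) (hJ : J = fun x => A x * C x - (B x) ^ 2) :
    J 0 = 0 ∧ deriv J 0 = 0 ∧ iteratedDeriv 2 J 0 = 0 ∧ iteratedDeriv 3 J 0 = 0 := by
  subst hJ
  -- differentiability facts
  have dA : Differentiable ℝ A := hA.differentiable (by norm_num)
  have dB : Differentiable ℝ B := hB.differentiable (by norm_num)
  have dC : Differentiable ℝ C := hC.differentiable (by norm_num)
  have hA2 : ContDiff ℝ 2 (deriv A) := by simpa using hA.iterate_deriv' 2 1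
  have hB2 : ContDiff ℝ 2 (deriv B) := by simpa using hB.iterate_deriv' 2 1
  have hC2 : ContDiff ℝ 2 (deriv C) := by simpa using hC.iterate_deriv' 2 1
  have dA' : Differentiable ℝ (deriv A) := hA2.differentiable (by norm_num)
  have dB' : Differentiable ℝ (deriv B) := hB2.differentiable (by norm_num)
  have dC' : Differentiable ℝ (deriv C) := hC2.differentiable (by norm_num)
  have hA1 : ContDiff ℝ 1 (deriv (deriv A)) := by
    have := hA.iterate_deriv' 1 2
    simpa [Function.iterate_succ_apply'] using this
  have hB1 : ContDiff ℝ 1 (deriv (deriv B)) := by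
    have := hB.iterate_deriv' 1 2
    simpa [Function.iterate_succ_apply'] using this
  have hC1 : ContDiff ℝ 1 (deriv (deriv C)) := by
    have := hC.iterate_deriv' 1 2
    simpa [Function.iterate_succ_apply'] using this
  have dA'' : Differentiable ℝ (deriv (deriv A)) := hA1.differentiable (by norm_num)
  have dB'' : Differentiable ℝ (deriv (deriv B)) := hB1.differentiable (by norm_num)
  have dC'' : Differentiable ℝ (deriv (deriv C)) := hC1.differentiable (by norm_num)
  -- first derivative of J
  have e1 : deriv (fun x => A x * C x - (B x) ^ 2)
      = fun x => deriv A x * C x + A x * deriv C x - 2 * B x * deriv B x := by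
    funext x
    have h : HasDerivAt (fun x => A x * C x - (B x) ^ 2)
        (deriv A x * C x + A x * deriv C x - ((2 : ℕ) * B x ^ 1 * deriv B x)) x :=
      (((dA x).hasDerivAt.mul (dC x).hasDerivAt).sub ((dB x).hasDerivAt.pow 2))
    rw [h.deriv]; ring
  -- second derivative of J
  have e2 : deriv (fun x => deriv A x * C x + A x * deriv C x - 2 * B x * deriv B x)
      = fun x => deriv (deriv A) x * C x + 2 * deriv A x * deriv C x
          + A x * deriv (deriv C) x - 2 * (deriv B x) ^ 2 - 2 * B x * deriv (deriv B) x := by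
    funext x
    have h : HasDerivAt (fun x => deriv A x * C x + A x * deriv C x - 2 * B x * deriv B x)
        ((deriv (deriv A) x * C x + deriv A x * deriv C x)
          + (deriv A x * deriv C x + A x * deriv (deriv C) x)
          - ((0 * B x + 2 * deriv B x) * deriv B x + (2 * B x) * deriv (deriv B) x)) x := by
      exact (((dA' x).hasDerivAt.mul (dC x).hasDerivAt).add
        ((dA x).hasDerivAt.mul (dC' x).hasDerivAt)).sub
        ((((hasDerivAt_const x (2 : ℝ)).mul (dB x).hasDerivAt)).mul (dB' x).hasDerivAt)
    rw [h.deriv]; ring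
  -- third derivative of J at 0
  have e3 : deriv (fun x => deriv (deriv A) x * C x + 2 * deriv A x * deriv C x
          + A x * deriv (deriv C) x - 2 * (deriv B x) ^ 2 - 2 * B x * deriv (deriv B) x) 0
      = deriv (deriv (deriv A)) 0 * C 0 + deriv (deriv A) 0 * deriv C 0
        + 2 * (deriv (deriv A) 0 * deriv C 0 + deriv A 0 * deriv (deriv C) 0)
        + (deriv A 0 * deriv (deriv C) 0 + A 0 * deriv (deriv (deriv C)) 0)
        - 4 * deriv B 0 * deriv (deriv B) 0
        - 2 * (deriv B 0 * deriv (deriv B) 0 + B 0 * deriv (deriv (deriv B)) 0) := by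
    have h : HasDerivAt (fun x => deriv (deriv A) x * C x + 2 * deriv A x * deriv C x
          + A x * deriv (deriv C) x - 2 * (deriv B x) ^ 2 - 2 * B x * deriv (deriv B) x)
        ((deriv (deriv (deriv A)) 0 * C 0 + deriv (deriv A) 0 * deriv C 0)
          + ((0 * deriv A 0 + 2 * deriv (deriv A) 0) * deriv C 0
              + (2 * deriv A 0) * deriv (deriv C) 0)
          + (deriv A 0 * deriv (deriv C) 0 + A 0 * deriv (deriv (deriv C)) 0)
          - (2 * ((2:ℕ) * deriv B 0 ^ 1 * deriv (deriv B) 0))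
          - ((0 * B 0 + 2 * deriv B 0) * deriv (deriv B) 0
              + (2 * B 0) * deriv (deriv (deriv B)) 0)) 0 := by
      exact (((((dA'' 0).hasDerivAt.mul (dC 0).hasDerivAt).add
        (((hasDerivAt_const 0 (2:ℝ)).mul (dA' 0).hasDerivAt).mul (dC' 0).hasDerivAt)).add
        ((dA 0).hasDerivAt.mul (dC'' 0).hasDerivAt)).sub
        (((dB' 0).hasDerivAt.pow 2).const_mul 2)).sub
        ((((hasDerivAt_const 0 (2:ℝ)).mul (dB 0).hasDerivAt)).mul (dB'' 0).hasDerivAt)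
    rw [h.deriv]; ring
  -- differentiating the relation
  have hrel' : deriv (deriv A) 0 * deriv C 0 + deriv A 0 * deriv (deriv C) 0
      = 2 * deriv B 0 * deriv (deriv B) 0 := by
    have h1 : HasDerivAt (fun y => deriv A y * deriv C y)
        (deriv (deriv A) 0 * deriv C 0 + deriv A 0 * deriv (deriv C) 0) 0 :=
      (dA' 0).hasDerivAt.mul (dC' 0).hasDerivAt
    have h2 : HasDerivAt (fun y => deriv B y ^ 2)
        ((2:ℕ) * deriv B 0 ^ 1 * deriv (deriv B) 0) 0 := (dB' 0).hasDerivAt.pow 2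
    have heq : (fun y => deriv A y * deriv C y) = fun y => deriv B y ^ 2 := funext hrel
    rw [heq] at h1
    have := h1.unique h2
    rw [this]; ring
  have hrel0 := hrel 0
  refine ⟨by simp [hA0, hC0, hB0], ?_, ?_, ?_⟩
  · rw [e1]; simp [hA0, hB0, hC0]
  · rw [show (2:ℕ) = 1 + 1 from rfl, iteratedDeriv_succ, iteratedDeriv_one, e1, e2]
    simp [hA0, hB0, hC0]
    nlinarith [hrel0]
  · rw [show (3:ℕ) = 1 + 1 + 1 from rfl, iteratedDeriv_succ, iteratedDeriv_succ,
      iteratedDeriv_one, e1, e2, e3]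
    rw [hA0, hB0, hC0]
    nlinarith [hrel']
end

section
/- Work in 2-dimensional Minkowski space with inner product η(x,y) = −x⁰y⁰ + x¹y¹. Let u₊, u₋ be unit timelike vectors (η(u±,u±) = −1), N a unit spacelike vector (η(N,N) = 1), f ≠ 0 a real number, and p₊, p₋, h₊, h₋ real numbers. Define v± by −η(u±, N) = f·v±. If f·h₊·u₊ − p₊·N = f·h₋·u₋ − p₋·N, then h₊² − h₋² = (p₊ − p₋)·(h₊v₊ + h₋v₋). -/
/-- The 2-dimensional Minkowski inner product `η(x,y) = -x⁰y⁰ + x¹y¹`. -/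
def mink2 (a b : ℝ × ℝ) : ℝ := -(a.1 * b.1) + a.2 * b.2

theorem stmt4 (uP uM N : ℝ × ℝ) (f pP pM hP hM vP vM : ℝ)
    (huP : mink2 uP uP = -1) (huM : mink2 uM uM = -1) (hN : mink2 N N = 1)
    (hf : f ≠ 0)
    (hvP : -(mink2 uP N) = f * vP) (hvM : -(mink2 uM N) = f * vM)
    (heq : (f * hP) • uP - pP • N = (f * hM) • uM - pM • N) :
    hP ^ 2 - hM ^ 2 = (pP - pM) * (hP * vP + hM * vM) := by
  have h1 := congrArg Prod.fst heq
  have h2 := congrArg Prod.snd heq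
  simp [Prod.smul_def, smul_eq_mul] at h1 h2
  unfold mink2 at huP huM hN hvP hvM
  have key1 : pP - pM = f^2 * (hM * vM - hP * vP) := by
    linear_combination N.1*h1 - N.2*h2 - (f*hP)*hvP + (f*hM)*hvM + (pM - pP)*hN
  have key2 : -(f^2*hP^2) + 2*f^2*hP*pP*vP + pP^2 = -(f^2*hM^2) + 2*f^2*hM*pM*vM + pM^2 := by
    linear_combination (-(f*hP*uP.1 - pP*N.1 + f*hM*uM.1 - pM*N.1))*h1
      + (f*hP*uP.2 - pP*N.2 + f*hM*uM.2 - pM*N.2)*h2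
      - (f^2*hP^2)*huP + (f^2*hM^2)*huM
      - (2*f*hP*pP)*hvP + (2*f*hM*pM)*hvM + (pM^2 - pP^2)*hN
  have hf2 : f^2 ≠ 0 := pow_ne_zero 2 hf
  have final : f^2 * (hP^2 - hM^2) = f^2 * ((pP - pM) * (hP*vP + hM*vM)) := by
    linear_combination (-1)*key2 + (pP + pM)*key1
  exact mul_left_cancel₀ hf2 final
end

section
/- Let f₀ : [0,ε] → ℝ be continuous, g₀(v) = ∫₀^v f₀(v′) dv′, and for j ≥ 1 let g_j(v) = ∫₀^v v′^j f₀(v′) dv′. Fix integers k ≥ 0 and l ≥ 1, and let G_{k,l} denote the l-fold iterated integral from 0 of the function v ↦ v^k g₀(v). Then G_{k,l}(v) = (k!/(k+l)!)·v^{k+l}·g₀(v) + Σ_{m=1}^{l} ((−1)^m/((m−1)!·(l−m)!))·(v^{l−m}/(k+m))·g_{k+m}(v). -/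
/-- The `l`-fold iterated integral from `0`: `iterInt 0 F = F` and
`iterInt (l+1) F v = ∫₀ᵛ iterInt l F`. -/
noncomputable def iterInt : ℕ → (ℝ → ℝ) → ℝ → ℝ
  | 0, F => F
  | (l + 1), F => fun v => ∫ t in (0:ℝ)..v, iterInt l F t

open Finset intervalIntegral

noncomputable def Aa (n k : ℕ) : ℝ :=
  ∑ j ∈ Finset.range (n+1), (-1:ℝ)^j * (n.choose j : ℝ) / ((k:ℝ)+1+(j:ℝ))

lemma Aa_rec (n k : ℕ) : Aa (n+1) k = Aa n k - Aa n (k+1) := by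
  have h3 : ∑ i ∈ Finset.range (n+2), (-1:ℝ)^i * ((n.choose i) : ℝ) / ((k:ℝ)+1+(i:ℝ))
      = Aa n k := by
    rw [Finset.sum_range_succ, Aa]
    simp [Nat.choose_succ_self]
  have h2 : ∑ j ∈ Finset.range (n+1),
      (-1:ℝ)^(j+1) * ((n.choose (j+1)) : ℝ) / ((k:ℝ)+1+((j:ℝ)+1))
      = Aa n k - 1/((k:ℝ)+1) := by
    have h := Finset.sum_range_succ'
      (fun i => (-1:ℝ)^i * ((n.choose i) : ℝ) / ((k:ℝ)+1+(i:ℝ))) (n+1)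
    rw [h3] at h
    push_cast at h ⊢
    rw [h]
    simp
  rw [Aa, Finset.sum_range_succ']
  push_cast
  have key : ∀ j ∈ Finset.range (n+1),
      (-1:ℝ)^(j+1) * (((n+1).choose (j+1)) : ℝ) / ((k:ℝ)+1+((j:ℝ)+1))
        = -((-1:ℝ)^j * ((n.choose j) : ℝ) / (((k:ℝ)+1)+1+(j:ℝ)))
          + (-1:ℝ)^(j+1) * ((n.choose (j+1)) : ℝ) / ((k:ℝ)+1+((j:ℝ)+1)) := by
    intro j hj
    rw [Nat.choose_succ_succ]
    push_cast
    ring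
  rw [Finset.sum_congr rfl key, Finset.sum_add_distrib, h2]
  have h4 : ∑ j ∈ Finset.range (n+1),
      -((-1:ℝ)^j * ((n.choose j) : ℝ) / (((k:ℝ)+1)+1+(j:ℝ))) = - Aa n (k+1) := by
    rw [Aa, ← Finset.sum_neg_distrib]
    apply Finset.sum_congr rfl
    intro j hj
    push_cast
    ring
  rw [h4]
  simp
  ring

lemma Aa_val (n : ℕ) : ∀ k : ℕ, Aa n k =
    (Nat.factorial n : ℝ) * (Nat.factorial k : ℝ) / (Nat.factorial (k+n+1) : ℝ) := by
  induction n with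
  | zero =>
    intro k
    have h : (Nat.factorial k : ℝ) ≠ 0 := Nat.cast_ne_zero.mpr (Nat.factorial_ne_zero k)
    simp [Aa, Nat.factorial_succ]
    push_cast
    field_simp
  | succ n ih =>
    intro k
    have hfact : ∀ m : ℕ, (Nat.factorial m : ℝ) ≠ 0 :=
      fun m => Nat.cast_ne_zero.mpr (Nat.factorial_ne_zero m)
    rw [Aa_rec, ih k, ih (k+1)]
    have e1 : k+1+n+1 = k+n+2 := by omega
    have e2 : k+(n+1)+1 = k+n+2 := by omega
    rw [e1, e2]
    have e3 : Nat.factorial (k+n+2) = (k+n+2) * Nat.factorial (k+n+1) := rfl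
    have e4 : Nat.factorial (k+1) = (k+1) * Nat.factorial k := rfl
    have e5 : Nat.factorial (n+1) = (n+1) * Nat.factorial n := rfl
    rw [e3, e4, e5]
    push_cast
    have h1 := hfact (k+n+1)
    field_simp
    ring

lemma Tlem (k l : ℕ) (hl : 1 ≤ l) :
    ∑ m ∈ Finset.Icc 1 l, (-1:ℝ)^m /
        ((Nat.factorial (m-1) : ℝ) * (Nat.factorial (l-m) : ℝ) * ((k:ℝ)+(m:ℝ)))
      = -(Nat.factorial k : ℝ) / (Nat.factorial (k+l) : ℝ) := by
  obtain ⟨n, rfl⟩ : ∃ n, l = n + 1 := ⟨l-1, by omega⟩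
  have hre : ∑ m ∈ Finset.Icc 1 (n+1), (-1:ℝ)^m /
        ((Nat.factorial (m-1) : ℝ) * (Nat.factorial (n+1-m) : ℝ) * ((k:ℝ)+(m:ℝ)))
      = ∑ j ∈ Finset.range (n+1), (-1:ℝ)^(1+j) /
        ((Nat.factorial ((1+j)-1) : ℝ) * (Nat.factorial (n+1-(1+j)) : ℝ) * ((k:ℝ)+((1+j:ℕ):ℝ))) := by
    rw [← Finset.Ico_add_one_right_eq_Icc, Finset.sum_Ico_eq_sum_range]
    simp only [Nat.add_sub_cancel]
  rw [hre]
  have key : ∀ j ∈ Finset.range (n+1),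
      (-1:ℝ)^(1+j) /
        ((Nat.factorial ((1+j)-1) : ℝ) * (Nat.factorial (n+1-(1+j)) : ℝ) * ((k:ℝ)+((1+j:ℕ):ℝ)))
      = (-(1:ℝ)/(Nat.factorial n : ℝ)) * ((-1:ℝ)^j * (n.choose j : ℝ) / ((k:ℝ)+1+(j:ℝ))) := by
    intro j hj
    have hj' : j ≤ n := by simpa using Nat.lt_succ_iff.mp (Finset.mem_range.mp hj)
    have e1 : (1+j)-1 = j := by omega
    have e2 : n+1-(1+j) = n-j := by omega
    rw [e1, e2]
    have hch : ((n.choose j : ℕ) : ℝ) * (Nat.factorial j : ℝ) * (Nat.factorial (n-j) : ℝ)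
        = (Nat.factorial n : ℝ) := by
      exact_mod_cast congrArg (Nat.cast (R := ℝ)) (Nat.choose_mul_factorial_mul_factorial hj')
    have h1 : (Nat.factorial j : ℝ) ≠ 0 := Nat.cast_ne_zero.mpr (Nat.factorial_ne_zero _)
    have h2 : (Nat.factorial (n-j) : ℝ) ≠ 0 := Nat.cast_ne_zero.mpr (Nat.factorial_ne_zero _)
    have h3 : (Nat.factorial n : ℝ) ≠ 0 := Nat.cast_ne_zero.mpr (Nat.factorial_ne_zero _)
    have h4 : (k:ℝ)+((1+j:ℕ):ℝ) ≠ 0 := by push_cast; positivity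
    have h5 : (k:ℝ)+1+(j:ℝ) ≠ 0 := by positivity
    have hch' : ((n.choose j : ℕ) : ℝ)
        = (Nat.factorial n : ℝ) / ((Nat.factorial j : ℝ) * (Nat.factorial (n-j) : ℝ)) := by
      rw [eq_div_iff (mul_ne_zero h1 h2)]
      linear_combination hch
    rw [pow_add, hch']
    push_cast at h4 ⊢
    field_simp
    ring
  rw [Finset.sum_congr rfl key, ← Finset.mul_sum, ← Aa, Aa_val]
  have h3 : (Nat.factorial n : ℝ) ≠ 0 := Nat.cast_ne_zero.mpr (Nat.factorial_ne_zero _)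
  have e : k+(n+1) = k+n+1 := by omega
  rw [e]
  field_simp

noncomputable def Gg (F : ℝ → ℝ) (j : ℕ) (v : ℝ) : ℝ := ∫ t in (0:ℝ)..v, t ^ j * F t

lemma hasDerivGg {F : ℝ → ℝ} (hF : Continuous F) (j : ℕ) (v : ℝ) :
    HasDerivAt (Gg F j) (v ^ j * F v) v :=
  (((continuous_pow j).mul hF).integral_hasStrictDerivAt 0 v).hasDerivAt

lemma contGg {F : ℝ → ℝ} (hF : Continuous F) (j : ℕ) : Continuous (Gg F j) :=
  continuous_iff_continuousAt.mpr fun v => (hasDerivGg hF j v).continuousAt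

lemma ibp {F : ℝ → ℝ} (hF : Continuous F) (a b : ℕ) (v : ℝ) :
    (∫ t in (0:ℝ)..v, t ^ a * Gg F b t)
      = v ^ (a+1) / ((a:ℝ)+1) * Gg F b v - (1/((a:ℝ)+1)) * Gg F (a+b+1) v := by
  have ha : ((a:ℝ)+1) ≠ 0 := by positivity
  have hu : ∀ x ∈ Set.uIcc (0:ℝ) v, HasDerivAt (Gg F b) (x ^ b * F x) x :=
    fun x _ => hasDerivGg hF b x
  have hv : ∀ x ∈ Set.uIcc (0:ℝ) v,
      HasDerivAt (fun t : ℝ => t ^ (a+1) / ((a:ℝ)+1)) (x ^ a) x := by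
    intro x _
    have h := (hasDerivAt_pow (a+1) x).div_const ((a:ℝ)+1)
    have e : (((a:ℕ)+1 : ℕ) : ℝ) * x ^ (a+1-1) / ((a:ℝ)+1) = x ^ a := by
      push_cast
      field_simp
    rwa [e] at h
  have hu' : IntervalIntegrable (fun x : ℝ => x ^ b * F x) MeasureTheory.volume 0 v :=
    ((continuous_pow b).mul hF).intervalIntegrable 0 v
  have hv' : IntervalIntegrable (fun x : ℝ => x ^ a) MeasureTheory.volume 0 v :=
    (continuous_pow a).intervalIntegrable 0 v
  have key := integral_mul_deriv_eq_deriv_mul hu hv hu' hv'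
  have h0 : Gg F b 0 = 0 := intervalIntegral.integral_same
  rw [h0] at key
  have hL : (∫ t in (0:ℝ)..v, t ^ a * Gg F b t) = ∫ x in (0:ℝ)..v, Gg F b x * x ^ a := by
    apply intervalIntegral.integral_congr
    intro t _
    ring
  have hR : (∫ x in (0:ℝ)..v, x ^ b * F x * (x ^ (a+1) / ((a:ℝ)+1)))
      = (1/((a:ℝ)+1)) * Gg F (a+b+1) v := by
    rw [Gg, ← intervalIntegral.integral_const_mul]
    apply intervalIntegral.integral_congr
    intro t _
    simp only []
    rw [pow_add, pow_add]
    ring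
  rw [hL, key, hR]
  ring


lemma mainF (F : ℝ → ℝ) (hF : Continuous F) (k : ℕ) :
    ∀ l : ℕ, 1 ≤ l → ∀ v : ℝ,
      iterInt l (fun w => w ^ k * Gg F 0 w) v =
        ((Nat.factorial k : ℝ) / (Nat.factorial (k + l))) * v ^ (k + l) * Gg F 0 v
        + ∑ m ∈ Finset.Icc 1 l,
            ((-1 : ℝ) ^ m / ((Nat.factorial (m - 1) : ℝ) * (Nat.factorial (l - m) : ℝ)))
              * (v ^ (l - m) / ((k : ℝ) + (m : ℝ))) * Gg F (k + m) v := by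
  intro l hl
  have hfne : ∀ n : ℕ, (Nat.factorial n : ℝ) ≠ 0 :=
    fun n => Nat.cast_ne_zero.mpr (Nat.factorial_ne_zero n)
  induction l, hl using Nat.le_induction with
  | base =>
    intro v
    have h1 : iterInt 1 (fun w => w ^ k * Gg F 0 w) v
        = ∫ t in (0:ℝ)..v, t ^ k * Gg F 0 t := by
      simp [iterInt]
    rw [h1, ibp hF k 0 v]
    simp only [Finset.Icc_self, Finset.sum_singleton, Nat.sub_self, Nat.factorial_zero,
      Nat.add_zero, pow_zero, pow_one, Nat.cast_one]
    rw [Nat.factorial_succ]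
    push_cast
    have hk : ((k:ℝ)+1) ≠ 0 := by positivity
    field_simp
    ring
  | succ l hl ih =>
    intro v
    have hcont : ∀ (c : ℝ) (a b : ℕ), Continuous (fun t : ℝ => c * (t ^ a * Gg F b t)) :=
      fun c a b => continuous_const.mul ((continuous_pow a).mul (contGg hF b))
    have h1 : iterInt (l+1) (fun w => w ^ k * Gg F 0 w) v = ∫ t in (0:ℝ)..v,
        (((Nat.factorial k : ℝ) / (Nat.factorial (k + l))) * (t ^ (k + l) * Gg F 0 t)
         + ∑ m ∈ Finset.Icc 1 l,
            ((((-1 : ℝ) ^ m / ((Nat.factorial (m - 1) : ℝ) * (Nat.factorial (l - m) : ℝ)))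
              / ((k : ℝ) + (m : ℝ))) * (t ^ (l - m) * Gg F (k + m) t))) := by
      show (∫ t in (0:ℝ)..v, iterInt l (fun w => w ^ k * Gg F 0 w) t) = _
      apply intervalIntegral.integral_congr
      intro t _
      rw [ih t]
      congr 1
      · ring
      · exact Finset.sum_congr rfl fun m hm => by ring
    have hInt1 : IntervalIntegrable
        (fun t : ℝ => ((Nat.factorial k : ℝ) / (Nat.factorial (k + l))) * (t ^ (k + l) * Gg F 0 t))
        MeasureTheory.volume 0 v := (hcont _ _ _).intervalIntegrable 0 v
    have hInt2 : IntervalIntegrable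
        (fun t : ℝ => ∑ m ∈ Finset.Icc 1 l,
            ((((-1 : ℝ) ^ m / ((Nat.factorial (m - 1) : ℝ) * (Nat.factorial (l - m) : ℝ)))
              / ((k : ℝ) + (m : ℝ))) * (t ^ (l - m) * Gg F (k + m) t)))
        MeasureTheory.volume 0 v :=
      (continuous_finset_sum _ fun m _ => hcont _ _ _).intervalIntegrable 0 v
    rw [h1, intervalIntegral.integral_add hInt1 hInt2,
      intervalIntegral.integral_const_mul, ibp hF (k+l) 0 v,
      intervalIntegral.integral_finset_sum
        (fun m _ => (hcont _ _ _).intervalIntegrable 0 v)]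
    have h2 : ∀ m ∈ Finset.Icc 1 l,
        (∫ t in (0:ℝ)..v,
          ((((-1 : ℝ) ^ m / ((Nat.factorial (m - 1) : ℝ) * (Nat.factorial (l - m) : ℝ)))
              / ((k : ℝ) + (m : ℝ))) * (t ^ (l - m) * Gg F (k + m) t)))
        = ((-1 : ℝ) ^ m / ((Nat.factorial (m - 1) : ℝ) * (Nat.factorial ((l+1) - m) : ℝ)))
              * (v ^ ((l+1) - m) / ((k : ℝ) + (m : ℝ))) * Gg F (k + m) v
          + (-((-1 : ℝ) ^ m / ((Nat.factorial (m - 1) : ℝ) * (Nat.factorial ((l+1) - m) : ℝ)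
              * ((k : ℝ) + (m : ℝ))))) * Gg F (k+l+1) v := by
      intro m hm
      obtain ⟨hm1, hm2⟩ := Finset.mem_Icc.mp hm
      rw [intervalIntegral.integral_const_mul, ibp hF (l-m) (k+m) v]
      have e1 : (l-m)+(k+m)+1 = k+l+1 := by omega
      have e2 : (l-m)+1 = (l+1)-m := by omega
      have e3 : (((l-m):ℕ):ℝ)+1 = (l:ℝ)+1-(m:ℝ) := by
        rw [Nat.cast_sub hm2]; ring
      rw [e1, e2, e3]
      have efac : (Nat.factorial ((l+1)-m) : ℝ)
          = ((l:ℝ)+1-(m:ℝ)) * (Nat.factorial (l-m) : ℝ) := by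
        have e4 : (l+1)-m = (l-m)+1 := by omega
        rw [e4, Nat.factorial_succ]
        push_cast [Nat.cast_sub hm2]
        ring
      rw [efac]
      have hml : (m:ℝ) ≤ (l:ℝ) := Nat.cast_le.mpr hm2
      have hm1' : (1:ℝ) ≤ (m:ℝ) := by exact_mod_cast hm1
      have hlm : (l:ℝ)+1-(m:ℝ) ≠ 0 := by
        have : (0:ℝ) < (l:ℝ)+1-(m:ℝ) := by linarith
        exact ne_of_gt this
      have hkm : ((k:ℝ)+(m:ℝ)) ≠ 0 := by
        have : (0:ℝ) < (k:ℝ)+(m:ℝ) := by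
          have : (0:ℝ) ≤ (k:ℝ) := Nat.cast_nonneg k
          linarith
        exact ne_of_gt this
      field_simp
      ring
    rw [Finset.sum_congr rfl h2, Finset.sum_add_distrib, ← Finset.sum_mul,
      Finset.sum_Icc_succ_top (by omega : 1 ≤ l+1)]
    have hT := Tlem k (l+1) (by omega)
    rw [Finset.sum_Icc_succ_top (by omega : 1 ≤ l+1)] at hT
    have eT1 : (l+1)-(l+1) = 0 := by omega
    have eT2 : (l+1)-1 = l := by omega
    have eT3 : k+(l+1) = k+l+1 := by omega
    rw [eT1, eT2, eT3] at hT ⊢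
    have hsum : (∑ m ∈ Finset.Icc 1 l,
        (-((-1 : ℝ) ^ m / ((Nat.factorial (m - 1) : ℝ) * (Nat.factorial ((l+1) - m) : ℝ)
              * ((k : ℝ) + (m : ℝ))))))
        = (Nat.factorial k : ℝ) / (Nat.factorial (k+l+1) : ℝ)
          + (-1:ℝ)^(l+1) / ((Nat.factorial l : ℝ) * (Nat.factorial 0 : ℝ)
              * ((k:ℝ)+((l:ℝ)+1))) := by
      rw [Finset.sum_neg_distrib]
      push_cast at hT ⊢
      linear_combination -hT
    rw [hsum]
    have eI : (k+l)+0+1 = k+l+1 := by omega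
    rw [eI]
    have hfac : (Nat.factorial (k+l+1) : ℝ) = ((k:ℝ)+(l:ℝ)+1) * (Nat.factorial (k+l) : ℝ) := by
      rw [Nat.factorial_succ]
      push_cast
      ring
    have hkl : ((k:ℝ)+(l:ℝ)+1) ≠ 0 := by positivity
    have e5 : ((((k+l):ℕ)):ℝ)+1 = (k:ℝ)+(l:ℝ)+1 := by push_cast; ring
    have e6 : v ^ ((k+l)+1) = v ^ (k+l+1) := rfl
    rw [e5, hfac]
    simp only [Nat.sub_self, pow_zero, Nat.factorial_zero, Nat.cast_one, mul_one, one_mul]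
    push_cast
    field_simp
    ring

lemma iterInt_congr {b : ℝ} (hb : 0 ≤ b) :
    ∀ (l : ℕ) (f f' : ℝ → ℝ), (∀ t ∈ Set.Icc (0:ℝ) b, f t = f' t) →
      ∀ v ∈ Set.Icc (0:ℝ) b, iterInt l f v = iterInt l f' v := by
  intro l
  induction l with
  | zero => intro f f' h v hv; exact h v hv
  | succ l ih =>
    intro f f' h v hv
    show (∫ t in (0:ℝ)..v, iterInt l f t) = ∫ t in (0:ℝ)..v, iterInt l f' t
    apply intervalIntegral.integral_congr
    intro t ht
    rw [Set.uIcc_of_le hv.1] at ht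
    exact ih f f' h t ⟨ht.1, ht.2.trans hv.2⟩

theorem stmt10 (ε : ℝ) (hε : 0 ≤ ε) (f₀ : ℝ → ℝ)
    (hf₀ : ContinuousOn f₀ (Set.Icc 0 ε))
    (g : ℕ → ℝ → ℝ) (hg : ∀ j, g j = fun v => ∫ t in (0:ℝ)..v, t ^ j * f₀ t)
    (k l : ℕ) (hl : 1 ≤ l) :
    ∀ v ∈ Set.Icc (0:ℝ) ε,
      iterInt l (fun w => w ^ k * g 0 w) v =
        ((Nat.factorial k : ℝ) / (Nat.factorial (k + l))) * v ^ (k + l) * g 0 v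
        + ∑ m ∈ Finset.Icc 1 l,
            ((-1 : ℝ) ^ m / ((Nat.factorial (m - 1) : ℝ) * (Nat.factorial (l - m) : ℝ)))
              * (v ^ (l - m) / ((k : ℝ) + (m : ℝ))) * g (k + m) v := by
  intro v hv
  set F : ℝ → ℝ := fun t => f₀ (Set.projIcc 0 ε hε t) with hFdef
  have hFc : Continuous F :=
    hf₀.comp_continuous (continuous_subtype_val.comp continuous_projIcc)
      (fun x => (Set.projIcc 0 ε hε x).2)
  have hFeq : ∀ t ∈ Set.Icc (0:ℝ) ε, F t = f₀ t := by
    intro t ht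
    simp only [hFdef]
    rw [Set.projIcc_of_mem hε ht]
  have hgG : ∀ (j : ℕ), ∀ w ∈ Set.Icc (0:ℝ) ε, g j w = Gg F j w := by
    intro j w hw
    have hGg : Gg F j w = ∫ t in (0:ℝ)..w, t ^ j * F t := rfl
    rw [hg j, hGg]
    apply intervalIntegral.integral_congr
    intro t ht
    rw [Set.uIcc_of_le hw.1] at ht
    show t ^ j * f₀ t = t ^ j * F t
    rw [hFeq t ⟨ht.1, ht.2.trans hw.2⟩]
  have h1 : iterInt l (fun w => w ^ k * g 0 w) v = iterInt l (fun w => w ^ k * Gg F 0 w) v :=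
    iterInt_congr hε l _ _ (fun t ht => by rw [hgG 0 t ht]) v hv
  rw [h1, mainF F hFc k l hl v, ← hgG 0 v hv]
  congr 1
  exact Finset.sum_congr rfl fun m hm => by rw [← hgG (k+m) v hv]
end

section
/- For every integer l ≥ 1 and every real k: l! + Σ_{m=1}^{l} C(l, m−1)·(−1)^m·∏_{i=1, i≠m}^{l+1} (k+i) = (−1)^l·(k+1)(k+2)⋯(k+l). Here C(l,m−1) is the binomial coefficient and the product runs over i = 1, …, l+1 omitting i = m. -/
open Finset

private lemma eraseTop (l m : ℕ) (hm : m ∈ Finset.Icc 1 (l+1)) :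
    (Finset.Icc 1 (l+2)).erase m = insert (l+2) ((Finset.Icc 1 (l+1)).erase m) := by
  simp only [Finset.mem_Icc] at hm
  ext x
  simp only [Finset.mem_erase, Finset.mem_insert, Finset.mem_Icc]
  omega

private lemma eraseShift (l m : ℕ) (hm : m ∈ Finset.Icc 1 l) :
    (Finset.Icc 1 (l+2)).erase (m+1)
      = insert 1 (((Finset.Icc 1 (l+1)).erase m).image (· + 1)) := by
  simp only [Finset.mem_Icc] at hm
  ext x
  simp only [Finset.mem_erase, Finset.mem_insert, Finset.mem_image, Finset.mem_Icc]
  constructor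
  · rintro ⟨h1, h2, h3⟩
    rcases Nat.eq_or_lt_of_le h2 with h | h
    · left; omega
    · right; exact ⟨x - 1, ⟨by omega, by omega, by omega⟩, by omega⟩
  · rintro (rfl | ⟨y, ⟨h1, h2, h3⟩, rfl⟩) <;> omega

private lemma imageIcc (l : ℕ) :
    Finset.Icc 1 (l+1) = insert 1 ((Finset.Icc 1 l).image (· + 1)) := by
  ext x
  simp only [Finset.mem_insert, Finset.mem_image, Finset.mem_Icc]
  constructor
  · rintro ⟨h1, h2⟩
    rcases Nat.eq_or_lt_of_le h1 with h | h
    · left; omega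
    · right; exact ⟨x - 1, ⟨by omega, by omega⟩, by omega⟩
  · rintro (rfl | ⟨y, ⟨h1, h2⟩, rfl⟩) <;> omega

theorem stmt11 (l : ℕ) (hl : 1 ≤ l) (k : ℝ) :
    (Nat.factorial l : ℝ)
      + ∑ m ∈ Finset.Icc 1 l, (Nat.choose l (m - 1) : ℝ) * (-1 : ℝ) ^ m *
          ∏ i ∈ (Finset.Icc 1 (l + 1)).erase m, (k + (i : ℝ))
    = (-1 : ℝ) ^ l * ∏ i ∈ Finset.Icc 1 l, (k + (i : ℝ)) := by
  induction l, hl using Nat.le_induction generalizing k with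
  | base =>
    have h1 : Finset.Icc 1 1 = {1} := rfl
    have h2 : (Finset.Icc 1 (1+1)).erase 1 = {2} := rfl
    rw [h1]
    rw [Finset.sum_singleton, h2]
    simp [Nat.factorial]
    ring
  | succ l hl IH =>
    -- Notation
    set Q : ℝ := ∏ i ∈ Finset.Icc 1 l, (k + (i : ℝ)) with hQ
    set Q' : ℝ := ∏ i ∈ Finset.Icc 1 l, ((k + 1) + (i : ℝ)) with hQ'
    -- Step 1: Pascal split of the sum
    have pascal : ∀ m ∈ Finset.Icc 1 (l+1),
        (Nat.choose (l+1) (m-1) : ℝ) * (-1:ℝ)^m *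
            ∏ i ∈ (Finset.Icc 1 (l+2)).erase m, (k + (i:ℝ))
        = (Nat.choose l (m-1) : ℝ) * (-1:ℝ)^m *
            ∏ i ∈ (Finset.Icc 1 (l+2)).erase m, (k + (i:ℝ))
          + (if m = 1 then 0 else (Nat.choose l (m-2) : ℝ)) * (-1:ℝ)^m *
            ∏ i ∈ (Finset.Icc 1 (l+2)).erase m, (k + (i:ℝ)) := by
      intro m hm
      simp only [Finset.mem_Icc] at hm
      rcases Nat.eq_or_lt_of_le hm.1 with h | h
      · subst h
        simp
      · have hm2 : 2 ≤ m := h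
        have h1 : m - 1 = (m - 2) + 1 := by omega
        rw [if_neg (by omega), h1, Nat.choose_succ_succ']
        push_cast
        ring
    rw [Finset.sum_congr rfl pascal, Finset.sum_add_distrib]
    -- Part A
    have hA : ∑ m ∈ Finset.Icc 1 (l+1), (Nat.choose l (m-1) : ℝ) * (-1:ℝ)^m *
            ∏ i ∈ (Finset.Icc 1 (l+2)).erase m, (k + (i:ℝ))
        = -(k + (l+2)) * (Nat.factorial l : ℝ) := by
      have step : ∀ m ∈ Finset.Icc 1 (l+1),
          (Nat.choose l (m-1) : ℝ) * (-1:ℝ)^m *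
              ∏ i ∈ (Finset.Icc 1 (l+2)).erase m, (k + (i:ℝ))
          = (k + (l+2)) * ((Nat.choose l (m-1) : ℝ) * (-1:ℝ)^m *
              ∏ i ∈ (Finset.Icc 1 (l+1)).erase m, (k + (i:ℝ))) := by
        intro m hm
        rw [eraseTop l m hm, Finset.prod_insert (by simp)]
        push_cast
        ring
      rw [Finset.sum_congr rfl step, ← Finset.mul_sum,
        Finset.sum_Icc_succ_top (by omega)]
      have htop : (Finset.Icc 1 (l+1)).erase (l+1) = Finset.Icc 1 l := by
        rw [Finset.Icc_erase_right, Finset.Ico_add_one_right_eq_Icc]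
      have hsum : ∑ m ∈ Finset.Icc 1 l, (Nat.choose l (m-1) : ℝ) * (-1:ℝ)^m *
            ∏ i ∈ (Finset.Icc 1 (l+1)).erase m, (k + (i:ℝ))
          = (-1:ℝ)^l * Q - (Nat.factorial l : ℝ) := by
        have := IH k
        linarith
      rw [hsum, htop]
      simp only [Nat.add_sub_cancel, Nat.choose_self, Nat.cast_one, ← hQ]
      rw [pow_succ]
      ring
    rw [hA]
    -- Part B
    have hB : ∑ m ∈ Finset.Icc 1 (l+1),
          (if m = 1 then 0 else (Nat.choose l (m-2) : ℝ)) * (-1:ℝ)^m *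
            ∏ i ∈ (Finset.Icc 1 (l+2)).erase m, (k + (i:ℝ))
        = -(k+1) * ((-1:ℝ)^l * Q' - (Nat.factorial l : ℝ)) := by
      rw [imageIcc l, Finset.sum_insert (by simp), if_pos rfl]
      rw [Finset.sum_image (by intro a _ b _ h; simp only at h; omega)]
      have step : ∀ m ∈ Finset.Icc 1 l,
          (if m + 1 = 1 then 0 else (Nat.choose l (m+1-2) : ℝ)) * (-1:ℝ)^(m+1) *
              ∏ i ∈ (Finset.Icc 1 (l+2)).erase (m+1), (k + (i:ℝ))
          = -(k+1) * ((Nat.choose l (m-1) : ℝ) * (-1:ℝ)^m *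
              ∏ i ∈ (Finset.Icc 1 (l+1)).erase m, ((k+1) + (i:ℝ))) := by
        intro m hm
        simp only [Finset.mem_Icc] at hm
        rw [if_neg (by omega)]
        have h2 : m + 1 - 2 = m - 1 := by omega
        rw [h2, eraseShift l m (by simp [Finset.mem_Icc]; omega),
          Finset.prod_insert (by simp),
          Finset.prod_image (by intro a _ b _ h; simp only at h; omega)]
        have hprod : ∀ i ∈ (Finset.Icc 1 (l+1)).erase m,
            (k + ((i + 1 : ℕ) : ℝ)) = ((k+1) + (i:ℝ)) := by
          intro i _; push_cast; ring
        rw [Finset.prod_congr rfl hprod, pow_succ]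
        push_cast
        ring
      rw [Finset.sum_congr rfl step, ← Finset.mul_sum]
      have := IH (k+1)
      have hsum : ∑ m ∈ Finset.Icc 1 l, (Nat.choose l (m-1) : ℝ) * (-1:ℝ)^m *
            ∏ i ∈ (Finset.Icc 1 (l+1)).erase m, ((k+1) + (i:ℝ))
          = (-1:ℝ)^l * Q' - (Nat.factorial l : ℝ) := by linarith
      rw [hsum]
      ring
    rw [hB]
    -- RHS
    have hRHS : ∏ i ∈ Finset.Icc 1 (l+1), (k + (i:ℝ)) = (k+1) * Q' := by
      rw [imageIcc l, Finset.prod_insert (by simp),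
        Finset.prod_image (by intro a _ b _ h; simp only at h; omega)]
      have hprod : ∀ i ∈ Finset.Icc 1 l,
          (k + ((i + 1 : ℕ) : ℝ)) = ((k+1) + (i:ℝ)) := by
        intro i _; push_cast; ring
      rw [Finset.prod_congr rfl hprod, ← hQ']
      norm_num
    rw [hRHS, Nat.factorial_succ, pow_succ]
    push_cast
    ring
end
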